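/- (Euler-factor tilt, large-p regime.) For every real λ > 0 there exists p₀ ∈ ℕ such that for every prime p ≥ p₀ the following holds: setting t = 1/Real.sqrt p (so t ∈ (0,1)), h_t(x) = 1 − 2·t·x + t², and g_t(x) = −Real.log (h_t(x)), the covariance of g_t and x² under the Euler-factor tilted semicircle is strictly positive: Cov^t_λ(g_t, x²) = E^t_λ[g_t(x)·x²] − E^t_λ[g_t(x)]·E^t_λ[x²] > 0. -/

import Mathlib

open intervalIntegral

/-- The Euler-factor polynomial `h_t(x) = 1 − 2tx + t²`. -/
noncomputable def eulerH (t x : ℝ) : ℝ := 1 - 2 * t * x + t ^ 2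

/-- The Euler-factor tilted weight `u_{t,λ}(x) = √(1 − x²)·h_t(x)^{−λ}` on `[-1,1]`. -/
noncomputable def eulerW (t lam x : ℝ) : ℝ := Real.sqrt (1 - x ^ 2) * eulerH t x ^ (-lam)

/-- The normalization constant `Z_t(λ)`. -/
noncomputable def eulerZ (t lam : ℝ) : ℝ := ∫ x in (-1 : ℝ)..1, eulerW t lam x

/-- The mean `E^t_λ[f]` under the Euler-factor tilted semicircle measure. -/
noncomputable def eulerE (t lam : ℝ) (f : ℝ → ℝ) : ℝ :=
  (eulerZ t lam)⁻¹ * ∫ x in (-1 : ℝ)..1, f x * eulerW t lam x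

/-- The covariance `Cov^t_λ(f, g)` under the Euler-factor tilted semicircle measure. -/
noncomputable def eulerCov (t lam : ℝ) (f g : ℝ → ℝ) : ℝ :=
  eulerE t lam (fun x => f x * g x) - eulerE t lam f * eulerE t lam g

lemma eulerH_pos {t x : ℝ} (ht0 : 0 < t) (ht1 : t < 1) (hx1 : -1 ≤ x) (hx2 : x ≤ 1) :
    0 < eulerH t x := by
  have h1 : 0 < (1 - t) ^ 2 := pow_pos (by linarith) 2
  have h2 : 0 ≤ t * (1 - x) := mul_nonneg ht0.le (by linarith)
  unfold eulerH; nlinarith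

lemma rpow_neg_anti {a b lam : ℝ} (ha : 0 < a) (hab : a ≤ b) (hlam : 0 ≤ lam) :
    b ^ (-lam) ≤ a ^ (-lam) := by
  rw [Real.rpow_neg ha.le, Real.rpow_neg (ha.le.trans hab)]
  exact inv_anti₀ (Real.rpow_pos_of_pos ha lam) (Real.rpow_le_rpow ha.le hab hlam)

lemma eulerW_nonneg {t lam x : ℝ} (ht0 : 0 < t) (ht1 : t < 1) (hx1 : -1 ≤ x) (hx2 : x ≤ 1) :
    0 ≤ eulerW t lam x :=
  mul_nonneg (Real.sqrt_nonneg _) (Real.rpow_pos_of_pos (eulerH_pos ht0 ht1 hx1 hx2) _).le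

lemma eulerW_pos {t lam x : ℝ} (ht0 : 0 < t) (ht1 : t < 1) (hx1 : -1 < x) (hx2 : x < 1) :
    0 < eulerW t lam x := by
  apply mul_pos (Real.sqrt_pos.2 (by nlinarith)) (Real.rpow_pos_of_pos (eulerH_pos ht0 ht1 hx1.le hx2.le) _)

lemma eulerW_mul {t lam u y : ℝ} (ht0 : 0 < t) (ht1 : t < 1)
    (hu1 : -1 ≤ u) (hu2 : u ≤ 1) (hy1 : -1 ≤ y) (hy2 : y ≤ 1) :
    eulerW t lam u * eulerW t lam y
      = (Real.sqrt (1 - u ^ 2) * Real.sqrt (1 - y ^ 2)) * (eulerH t u * eulerH t y) ^ (-lam) := by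
  rw [Real.mul_rpow (eulerH_pos ht0 ht1 hu1 hu2).le (eulerH_pos ht0 ht1 hy1 hy2).le]
  unfold eulerW; ring

/-- W₂ ≤ W₁ when `0 ≤ u + y`. -/
lemma eulerW_reflect_le {t lam u y : ℝ} (ht0 : 0 < t) (ht1 : t < 1) (hlam : 0 < lam)
    (hu1 : -1 ≤ u) (hu2 : u ≤ 1) (hy1 : -1 ≤ y) (hy2 : y ≤ 1) (hsum : 0 ≤ u + y) :
    eulerW t lam (-u) * eulerW t lam (-y) ≤ eulerW t lam u * eulerW t lam y := by
  rw [eulerW_mul ht0 ht1 hu1 hu2 hy1 hy2,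
      eulerW_mul ht0 ht1 (by linarith) (by linarith) (by linarith) (by linarith)]
  have hS : (0:ℝ) ≤ Real.sqrt (1 - (-u) ^ 2) * Real.sqrt (1 - (-y) ^ 2) :=
    mul_nonneg (Real.sqrt_nonneg _) (Real.sqrt_nonneg _)
  have hSeq : Real.sqrt (1 - (-u) ^ 2) * Real.sqrt (1 - (-y) ^ 2)
      = Real.sqrt (1 - u ^ 2) * Real.sqrt (1 - y ^ 2) := by rw [neg_sq, neg_sq]
  rw [hSeq]
  apply mul_le_mul_of_nonneg_left _ (hSeq ▸ hS)
  apply rpow_neg_anti (mul_pos (eulerH_pos ht0 ht1 hu1 hu2) (eulerH_pos ht0 ht1 hy1 hy2)) _ hlam.le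
  have := mul_nonneg (mul_nonneg ht0.le hsum) (sq_nonneg t)
  have := mul_nonneg ht0.le hsum
  unfold eulerH; nlinarith

/-- the log-difference inequality: `log(Hu·H(−u)) ≤ log(Hy·H(−y))` when `y² ≤ u²`. -/
lemma eulerH_log_reflect {t u y : ℝ} (ht0 : 0 < t) (ht1 : t < 1)
    (hu1 : -1 ≤ u) (hu2 : u ≤ 1) (hy1 : -1 ≤ y) (hy2 : y ≤ 1) (hsq : y ^ 2 ≤ u ^ 2) :
    Real.log (eulerH t u) + Real.log (eulerH t (-u))
      ≤ Real.log (eulerH t y) + Real.log (eulerH t (-y)) := by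
  have hHu := eulerH_pos ht0 ht1 hu1 hu2
  have hHnu := eulerH_pos (x := -u) ht0 ht1 (by linarith) (by linarith)
  have hHy := eulerH_pos ht0 ht1 hy1 hy2
  have hHny := eulerH_pos (x := -y) ht0 ht1 (by linarith) (by linarith)
  rw [← Real.log_mul hHu.ne' hHnu.ne', ← Real.log_mul hHy.ne' hHny.ne']
  apply Real.log_le_log (mul_pos hHu hHnu)
  have h4 : 4 * t ^ 2 * y ^ 2 ≤ 4 * t ^ 2 * u ^ 2 :=
    mul_le_mul_of_nonneg_left hsq (by positivity)
  unfold eulerH; nlinarith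

/-- Key pointwise lemma, main case: `0 ≤ u`, `y² ≤ u²`. -/
lemma euler_psi_nonneg_aux {t lam u y : ℝ} (ht0 : 0 < t) (ht1 : t < 1) (hlam : 0 < lam)
    (hu1 : -1 ≤ u) (hu2 : u ≤ 1) (hy1 : -1 ≤ y) (hy2 : y ≤ 1)
    (hu0 : 0 ≤ u) (hsq : y ^ 2 ≤ u ^ 2) :
    0 ≤ ((-Real.log (eulerH t u)) - (-Real.log (eulerH t y))) * (u ^ 2 - y ^ 2) *
          (eulerW t lam u * eulerW t lam y)
      + ((-Real.log (eulerH t (-u))) - (-Real.log (eulerH t (-y)))) * ((-u) ^ 2 - (-y) ^ 2) *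
          (eulerW t lam (-u) * eulerW t lam (-y)) := by
  have huy : y ≤ u := by nlinarith
  have hsum : 0 ≤ u + y := by nlinarith
  have hHu := eulerH_pos ht0 ht1 hu1 hu2
  have hHnu := eulerH_pos (x := -u) ht0 ht1 (by linarith) (by linarith)
  have hHy := eulerH_pos ht0 ht1 hy1 hy2
  have hHny := eulerH_pos (x := -y) ht0 ht1 (by linarith) (by linarith)
  set lu := Real.log (eulerH t u)
  set ly := Real.log (eulerH t y)
  set lnu := Real.log (eulerH t (-u))
  set lny := Real.log (eulerH t (-y))
  set W₁ := eulerW t lam u * eulerW t lam y with hW₁def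
  set W₂ := eulerW t lam (-u) * eulerW t lam (-y) with hW₂def
  have hP : 0 ≤ ly - lu := by
    have : eulerH t u ≤ eulerH t y := by unfold eulerH; nlinarith
    have := Real.log_le_log hHu this
    linarith
  have hQ : 0 ≤ lnu - lny := by
    have : eulerH t (-y) ≤ eulerH t (-u) := by unfold eulerH; nlinarith
    have := Real.log_le_log hHny this
    linarith
  have hPQ : lnu - lny ≤ ly - lu := by
    have := eulerH_log_reflect ht0 ht1 hu1 hu2 hy1 hy2 hsq
    linarith
  have hW₂ : 0 ≤ W₂ :=
    mul_nonneg (eulerW_nonneg ht0 ht1 (by linarith) (by linarith))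
      (eulerW_nonneg ht0 ht1 (by linarith) (by linarith))
  have hW : W₂ ≤ W₁ := eulerW_reflect_le ht0 ht1 hlam hu1 hu2 hy1 hy2 hsum
  have hW₁ : 0 ≤ W₁ := hW₂.trans hW
  have hkey : (lnu - lny) * W₂ ≤ (ly - lu) * W₁ :=
    (mul_le_mul_of_nonneg_left hW hQ).trans (mul_le_mul_of_nonneg_right hPQ hW₁)
  have hfac : 0 ≤ (u ^ 2 - y ^ 2) * ((ly - lu) * W₁ - (lnu - lny) * W₂) :=
    mul_nonneg (by linarith) (by linarith)
  nlinarith [hfac]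

/-- Key pointwise lemma, general version. -/
lemma euler_psi_nonneg {t lam u y : ℝ} (ht0 : 0 < t) (ht1 : t < 1) (hlam : 0 < lam)
    (hu1 : -1 ≤ u) (hu2 : u ≤ 1) (hy1 : -1 ≤ y) (hy2 : y ≤ 1) :
    0 ≤ ((-Real.log (eulerH t u)) - (-Real.log (eulerH t y))) * (u ^ 2 - y ^ 2) *
          (eulerW t lam u * eulerW t lam y)
      + ((-Real.log (eulerH t (-u))) - (-Real.log (eulerH t (-y)))) * ((-u) ^ 2 - (-y) ^ 2) *
          (eulerW t lam (-u) * eulerW t lam (-y)) := by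
  rcases le_total (y ^ 2) (u ^ 2) with hsq | hsq
  · rcases le_total 0 u with hu0 | hu0
    · exact euler_psi_nonneg_aux ht0 ht1 hlam hu1 hu2 hy1 hy2 hu0 hsq
    · have h := euler_psi_nonneg_aux (u := -u) (y := -y) ht0 ht1 hlam
        (by linarith) (by linarith) (by linarith) (by linarith) (by linarith)
        (by rw [neg_sq, neg_sq]; exact hsq)
      rw [neg_neg, neg_neg] at h
      nlinarith [h]
  · rcases le_total 0 y with hy0 | hy0
    · have h := euler_psi_nonneg_aux (u := y) (y := u) ht0 ht1 hlam hy1 hy2 hu1 hu2 hy0 hsq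
      nlinarith [h]
    · have h := euler_psi_nonneg_aux (u := -y) (y := -u) ht0 ht1 hlam
        (by linarith) (by linarith) (by linarith) (by linarith) (by linarith)
        (by rw [neg_sq, neg_sq]; exact hsq)
      rw [neg_neg, neg_neg] at h
      nlinarith [h]

/-- Strict positivity on the region `0 < y < u < 1`. -/
lemma euler_psi_pos {t lam u y : ℝ} (ht0 : 0 < t) (ht1 : t < 1) (hlam : 0 < lam)
    (hy0 : 0 < y) (hyu : y < u) (hu2 : u < 1) :
    0 < ((-Real.log (eulerH t u)) - (-Real.log (eulerH t y))) * (u ^ 2 - y ^ 2) *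
          (eulerW t lam u * eulerW t lam y)
      + ((-Real.log (eulerH t (-u))) - (-Real.log (eulerH t (-y)))) * ((-u) ^ 2 - (-y) ^ 2) *
          (eulerW t lam (-u) * eulerW t lam (-y)) := by
  have hu1 : (-1:ℝ) ≤ u := by linarith
  have hy1 : (-1:ℝ) ≤ y := by linarith
  have hy2 : y ≤ 1 := by linarith
  have hsum : 0 ≤ u + y := by linarith
  have hHu := eulerH_pos (x := u) ht0 ht1 hu1 hu2.le
  have hHnu := eulerH_pos (x := -u) ht0 ht1 (by linarith) (by linarith)
  have hHy := eulerH_pos (x := y) ht0 ht1 hy1 hy2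
  have hHny := eulerH_pos (x := -y) ht0 ht1 (by linarith) (by linarith)
  set lu := Real.log (eulerH t u)
  set ly := Real.log (eulerH t y)
  set lnu := Real.log (eulerH t (-u))
  set lny := Real.log (eulerH t (-y))
  set W₁ := eulerW t lam u * eulerW t lam y with hW₁def
  set W₂ := eulerW t lam (-u) * eulerW t lam (-y) with hW₂def
  have hQ : 0 ≤ lnu - lny := by
    have : eulerH t (-y) ≤ eulerH t (-u) := by unfold eulerH; nlinarith
    have := Real.log_le_log hHny this
    linarith
  have hPQ : lnu - lny < ly - lu := by
    have hlt : eulerH t u * eulerH t (-u) < eulerH t y * eulerH t (-y) := by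
      have h1 : 0 < t ^ 2 := by positivity
      have h2 : 0 < u ^ 2 - y ^ 2 := by nlinarith
      unfold eulerH; nlinarith [mul_pos h1 h2]
    have := Real.log_lt_log (mul_pos hHu hHnu) hlt
    rw [Real.log_mul hHu.ne' hHnu.ne', Real.log_mul hHy.ne' hHny.ne'] at this
    linarith
  have hW₁pos : 0 < W₁ :=
    mul_pos (eulerW_pos ht0 ht1 (by linarith) hu2) (eulerW_pos ht0 ht1 (by linarith) (by linarith))
  have hW : W₂ ≤ W₁ := eulerW_reflect_le ht0 ht1 hlam hu1 hu2.le hy1 hy2 hsum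
  have hkey : (lnu - lny) * W₂ < (ly - lu) * W₁ :=
    lt_of_le_of_lt (mul_le_mul_of_nonneg_left hW hQ) (by nlinarith)
  have hfac : 0 < (u ^ 2 - y ^ 2) * ((ly - lu) * W₁ - (lnu - lny) * W₂) := by
    apply mul_pos (by nlinarith) (by linarith)
  nlinarith [hfac]


lemma eulerCov_pos_of_t (t lam : ℝ) (ht0 : 0 < t) (ht1 : t < 1) (hlam : 0 < lam) :
    0 < eulerCov t lam (fun x => -Real.log (eulerH t x)) (fun x => x ^ 2) := by
  have hIcc : Set.uIcc (-1:ℝ) 1 = Set.Icc (-1:ℝ) 1 := Set.uIcc_of_le (by norm_num)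
  set f : ℝ → ℝ := fun x => -Real.log (eulerH t x) with hfdef
  set w : ℝ → ℝ := eulerW t lam with hwdef
  set Z : ℝ := eulerZ t lam with hZdef
  -- continuity facts
  have hcH : Continuous (eulerH t) := by unfold eulerH; fun_prop
  have hcw : ContinuousOn w (Set.Icc (-1:ℝ) 1) := by
    rw [hwdef]; unfold eulerW
    apply ContinuousOn.mul
    · exact (Real.continuous_sqrt.comp (by fun_prop)).continuousOn
    · exact ContinuousOn.rpow_const hcH.continuousOn
        (fun x hx => Or.inl (eulerH_pos ht0 ht1 hx.1 hx.2).ne')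
  have hcf : ContinuousOn f (Set.Icc (-1:ℝ) 1) := by
    rw [hfdef]
    exact (ContinuousOn.log hcH.continuousOn
      (fun x hx => (eulerH_pos ht0 ht1 hx.1 hx.2).ne')).neg
  have hmapneg : Set.MapsTo (fun y : ℝ => -y) (Set.Icc (-1:ℝ) 1) (Set.Icc (-1:ℝ) 1) :=
    fun x hx => ⟨by simpa using neg_le_neg hx.2, by simpa using neg_le_neg hx.1⟩
  have hcwn : ContinuousOn (fun y => w (-y)) (Set.Icc (-1:ℝ) 1) :=
    hcw.comp continuous_neg.continuousOn hmapneg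
  have hcfn : ContinuousOn (fun y => f (-y)) (Set.Icc (-1:ℝ) 1) :=
    hcf.comp continuous_neg.continuousOn hmapneg
  -- integrability of the building blocks
  have iw : IntervalIntegrable w MeasureTheory.volume (-1) 1 :=
    (hIcc ▸ hcw).intervalIntegrable
  have iA : IntervalIntegrable (fun y => y ^ 2 * w y) MeasureTheory.volume (-1) 1 :=
    (hIcc ▸ ((continuous_pow 2).continuousOn.mul hcw)).intervalIntegrable
  have iB : IntervalIntegrable (fun y => f y * w y) MeasureTheory.volume (-1) 1 :=
    (hIcc ▸ (hcf.mul hcw)).intervalIntegrable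
  have iC : IntervalIntegrable (fun y => f y * y ^ 2 * w y) MeasureTheory.volume (-1) 1 :=
    (hIcc ▸ ((hcf.mul (continuous_pow 2).continuousOn).mul hcw)).intervalIntegrable
  set A : ℝ := ∫ x in (-1:ℝ)..1, x ^ 2 * w x with hAdef
  set B : ℝ := ∫ x in (-1:ℝ)..1, f x * w x with hBdef
  set C : ℝ := ∫ x in (-1:ℝ)..1, f x * x ^ 2 * w x with hCdef
  have hZint : Z = ∫ x in (-1:ℝ)..1, w x := rfl
  set K : ℝ → ℝ := fun u => w u * (f u * u ^ 2 * Z - f u * A - u ^ 2 * B + C) with hKdef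
  -- inner integral identity
  have inner : ∀ u : ℝ, (∫ y in (-1:ℝ)..1, (f u - f y) * (u ^ 2 - y ^ 2) * (w u * w y)) = K u := by
    intro u
    have h1 : ∀ y : ℝ, (f u - f y) * (u ^ 2 - y ^ 2) * (w u * w y)
        = w u * (f u * u ^ 2 * w y - f u * (y ^ 2 * w y) - u ^ 2 * (f y * w y)
            + f y * y ^ 2 * w y) := by
      intro y; ring
    simp only [h1]
    rw [intervalIntegral.integral_const_mul]
    rw [intervalIntegral.integral_add
          (((iw.const_mul _).sub (iA.const_mul _)).sub (iB.const_mul _)) iC,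
        intervalIntegral.integral_sub ((iw.const_mul _).sub (iA.const_mul _)) (iB.const_mul _),
        intervalIntegral.integral_sub (iw.const_mul _) (iA.const_mul _),
        intervalIntegral.integral_const_mul, intervalIntegral.integral_const_mul,
        intervalIntegral.integral_const_mul]
    rw [hKdef, ← hZint, ← hAdef, ← hBdef, ← hCdef]
  -- symmetrized integrand
  set Ψ : ℝ → ℝ → ℝ := fun u y =>
      (f u - f y) * (u ^ 2 - y ^ 2) * (w u * w y)
        + (f (-u) - f (-y)) * ((-u) ^ 2 - (-y) ^ 2) * (w (-u) * w (-y)) with hΨdef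
  have hcΨ : ∀ u : ℝ, ContinuousOn (Ψ u) (Set.Icc (-1:ℝ) 1) := by
    intro u
    rw [hΨdef]
    apply ContinuousOn.add
    · exact ((continuousOn_const.sub hcf).mul
        (continuousOn_const.sub ((continuous_pow 2).continuousOn))).mul
        (continuousOn_const.mul hcw)
    · apply ContinuousOn.mul
      apply ContinuousOn.mul
      · exact continuousOn_const.sub hcfn
      · exact continuousOn_const.sub (by fun_prop)
      · exact continuousOn_const.mul hcwn
  have iΨ : ∀ u : ℝ, ∀ a b : ℝ, Set.uIcc a b ⊆ Set.Icc (-1:ℝ) 1 →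
      IntervalIntegrable (Ψ u) MeasureTheory.volume a b := by
    intro u a b hsub
    exact ((hcΨ u).mono hsub).intervalIntegrable
  have i1 : ∀ u : ℝ, IntervalIntegrable
      (fun y => (f u - f y) * (u ^ 2 - y ^ 2) * (w u * w y)) MeasureTheory.volume (-1) 1 := by
    intro u
    apply ContinuousOn.intervalIntegrable
    rw [hIcc]
    exact ((continuousOn_const.sub hcf).mul
      (continuousOn_const.sub ((continuous_pow 2).continuousOn))).mul
      (continuousOn_const.mul hcw)
  have i2 : ∀ u : ℝ, IntervalIntegrable
      (fun y => (f (-u) - f (-y)) * ((-u) ^ 2 - (-y) ^ 2) * (w (-u) * w (-y)))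
      MeasureTheory.volume (-1) 1 := by
    intro u
    apply ContinuousOn.intervalIntegrable
    rw [hIcc]
    apply ContinuousOn.mul
    apply ContinuousOn.mul
    · exact continuousOn_const.sub hcfn
    · exact continuousOn_const.sub (by fun_prop)
    · exact continuousOn_const.mul hcwn
  -- inner symmetrized identity
  have hinner2 : ∀ u : ℝ, (∫ y in (-1:ℝ)..1, Ψ u y) = K u + K (-u) := by
    intro u
    have hsplit : (∫ y in (-1:ℝ)..1, Ψ u y)
        = (∫ y in (-1:ℝ)..1, (f u - f y) * (u ^ 2 - y ^ 2) * (w u * w y))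
          + ∫ y in (-1:ℝ)..1,
              (f (-u) - f (-y)) * ((-u) ^ 2 - (-y) ^ 2) * (w (-u) * w (-y)) := by
      rw [hΨdef]
      exact intervalIntegral.integral_add (i1 u) (i2 u)
    have e2 : (∫ y in (-1:ℝ)..1, (f (-u) - f (-y)) * ((-u) ^ 2 - (-y) ^ 2) * (w (-u) * w (-y)))
        = ∫ y in (-1:ℝ)..1, (f (-u) - f y) * ((-u) ^ 2 - y ^ 2) * (w (-u) * w y) := by
      have h := intervalIntegral.integral_comp_neg (a := (-1:ℝ)) (b := 1)
        (fun z => (f (-u) - f z) * ((-u) ^ 2 - z ^ 2) * (w (-u) * w z))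
      simpa using h
    rw [hsplit, e2, inner u, inner (-u)]
  -- continuity of K and of u ↦ K u + K (-u)
  have hcK : ContinuousOn K (Set.Icc (-1:ℝ) 1) := by
    rw [hKdef]
    apply ContinuousOn.mul hcw
    exact ((((hcf.mul (continuous_pow 2).continuousOn).mul continuousOn_const).sub
      (hcf.mul continuousOn_const)).sub ((continuous_pow 2).continuousOn.mul
        continuousOn_const)).add continuousOn_const
  have sub_a : Set.uIcc (-1:ℝ) (1/2) ⊆ Set.Icc (-1:ℝ) 1 := by
    rw [Set.uIcc_of_le (by norm_num : (-1:ℝ) ≤ 1/2)]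
    exact Set.Icc_subset_Icc le_rfl (by norm_num)
  have sub_b : Set.uIcc (1/2:ℝ) 1 ⊆ Set.Icc (-1:ℝ) 1 := by
    rw [Set.uIcc_of_le (by norm_num : (1/2:ℝ) ≤ 1)]
    exact Set.Icc_subset_Icc (by norm_num) le_rfl
  have hcKn : ContinuousOn (fun u => K (-u)) (Set.Icc (-1:ℝ) 1) :=
    hcK.comp continuous_neg.continuousOn hmapneg
  have hcG : ContinuousOn (fun u => K u + K (-u)) (Set.Icc (-1:ℝ) 1) := hcK.add hcKn
  have iG : ∀ a b : ℝ, Set.uIcc a b ⊆ Set.Icc (-1:ℝ) 1 →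
      IntervalIntegrable (fun u => K u + K (-u)) MeasureTheory.volume a b :=
    fun a b hsub => ((hcG.mono hsub).intervalIntegrable)
  -- outer integral value
  have houter : (∫ u in (-1:ℝ)..1, (K u + K (-u))) = 4 * (Z * C - A * B) := by
    have iK : IntervalIntegrable K MeasureTheory.volume (-1) 1 := (hIcc ▸ hcK).intervalIntegrable
    have iKn : IntervalIntegrable (fun u => K (-u)) MeasureTheory.volume (-1) 1 :=
      (hIcc ▸ hcKn).intervalIntegrable
    rw [intervalIntegral.integral_add iK iKn]
    have e3 : (∫ u in (-1:ℝ)..1, K (-u)) = ∫ u in (-1:ℝ)..1, K u := by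
      have h := intervalIntegral.integral_comp_neg (a := (-1:ℝ)) (b := 1) K
      simpa using h
    have e4 : (∫ u in (-1:ℝ)..1, K u) = 2 * (Z * C - A * B) := by
      have h1 : ∀ u : ℝ, K u
          = Z * (f u * u ^ 2 * w u) - A * (f u * w u) - B * (u ^ 2 * w u) + C * w u := by
        intro u; rw [hKdef]; ring
      simp only [h1]
      rw [intervalIntegral.integral_add
            (((iC.const_mul _).sub (iB.const_mul _)).sub (iA.const_mul _)) (iw.const_mul _),
          intervalIntegral.integral_sub ((iC.const_mul _).sub (iB.const_mul _)) (iA.const_mul _),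
          intervalIntegral.integral_sub (iC.const_mul _) (iB.const_mul _),
          intervalIntegral.integral_const_mul, intervalIntegral.integral_const_mul,
          intervalIntegral.integral_const_mul, intervalIntegral.integral_const_mul,
          ← hZint, ← hAdef, ← hBdef, ← hCdef]
      ring
    rw [e3, e4]; ring
  -- pointwise sign facts for G := K u + K (-u)
  have hGnn : ∀ u ∈ Set.Icc (-1:ℝ) 1, 0 ≤ K u + K (-u) := by
    intro u hu
    rw [← hinner2 u]
    apply intervalIntegral.integral_nonneg (by norm_num)
    intro y hy
    rw [hΨdef]
    exact euler_psi_nonneg ht0 ht1 hlam hu.1 hu.2 hy.1 hy.2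
  have hGpos : ∀ u ∈ Set.Ioo (1/2 : ℝ) 1, 0 < K u + K (-u) := by
    intro u hu
    rw [← hinner2 u]
    have s1 : Set.uIcc (-1:ℝ) 0 ⊆ Set.Icc (-1:ℝ) 1 := by
      rw [Set.uIcc_of_le (by norm_num)]; exact Set.Icc_subset_Icc le_rfl (by norm_num)
    have s2 : Set.uIcc (0:ℝ) (1/2) ⊆ Set.Icc (-1:ℝ) 1 := by
      rw [Set.uIcc_of_le (by norm_num)]; exact Set.Icc_subset_Icc (by norm_num) (by norm_num)
    have s3 : Set.uIcc (1/2:ℝ) 1 ⊆ Set.Icc (-1:ℝ) 1 := by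
      rw [Set.uIcc_of_le (by norm_num)]; exact Set.Icc_subset_Icc (by norm_num) le_rfl
    have m1 : (∫ y in (-1:ℝ)..0, Ψ u y) + (∫ y in (0:ℝ)..(1/2), Ψ u y)
        = ∫ y in (-1:ℝ)..(1/2), Ψ u y :=
      intervalIntegral.integral_add_adjacent_intervals (iΨ u _ _ s1) (iΨ u _ _ s2)
    have m2 : (∫ y in (-1:ℝ)..(1/2), Ψ u y) + (∫ y in (1/2:ℝ)..1, Ψ u y)
        = ∫ y in (-1:ℝ)..1, Ψ u y :=
      intervalIntegral.integral_add_adjacent_intervals (iΨ u _ _ sub_a) (iΨ u _ _ s3)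
    have n1 : 0 ≤ ∫ y in (-1:ℝ)..0, Ψ u y := by
      apply intervalIntegral.integral_nonneg (by norm_num)
      intro y hy
      rw [hΨdef]
      exact euler_psi_nonneg ht0 ht1 hlam (by linarith [hu.1]) hu.2.le hy.1 (by linarith [hy.2])
    have n3 : 0 ≤ ∫ y in (1/2:ℝ)..1, Ψ u y := by
      apply intervalIntegral.integral_nonneg (by norm_num)
      intro y hy
      rw [hΨdef]
      exact euler_psi_nonneg ht0 ht1 hlam (by linarith [hu.1]) hu.2.le
        (by linarith [hy.1]) hy.2
    have n2 : 0 < ∫ y in (0:ℝ)..(1/2), Ψ u y := by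
      apply intervalIntegral.intervalIntegral_pos_of_pos_on (iΨ u _ _ s2) _ (by norm_num)
      intro y hy
      rw [hΨdef]
      exact euler_psi_pos ht0 ht1 hlam hy.1 (by linarith [hy.2, hu.1]) hu.2
    linarith
  -- positivity of the outer integral
  have hsum : (∫ u in (-1:ℝ)..(1/2), (K u + K (-u))) + (∫ u in (1/2:ℝ)..1, (K u + K (-u)))
      = ∫ u in (-1:ℝ)..1, (K u + K (-u)) :=
    intervalIntegral.integral_add_adjacent_intervals (iG _ _ sub_a) (iG _ _ sub_b)
  have p1 : 0 ≤ ∫ u in (-1:ℝ)..(1/2), (K u + K (-u)) := by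
    apply intervalIntegral.integral_nonneg (by norm_num)
    intro u hu
    exact hGnn u ⟨hu.1, by linarith [hu.2]⟩
  have p2 : 0 < ∫ u in (1/2:ℝ)..1, (K u + K (-u)) := by
    apply intervalIntegral.intervalIntegral_pos_of_pos_on (iG _ _ sub_b) _ (by norm_num)
    intro u hu
    exact hGpos u hu
  have hdiff : 0 < Z * C - A * B := by
    have : 0 < ∫ u in (-1:ℝ)..1, (K u + K (-u)) := by linarith
    rw [houter] at this
    linarith
  -- positivity of Z
  have hZpos : 0 < Z := by
    rw [hZint]
    apply intervalIntegral.intervalIntegral_pos_of_pos_on iw _ (by norm_num)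
    intro x hx
    exact eulerW_pos ht0 ht1 hx.1 hx.2
  -- conclusion
  have hcov : eulerCov t lam f (fun x => x ^ 2) = (Z * C - A * B) * (Z⁻¹ * Z⁻¹) := by
    unfold eulerCov eulerE
    rw [← hwdef, ← hZdef]
    simp only
    rw [← hAdef, ← hBdef]
    have : (∫ x in (-1:ℝ)..1, f x * x ^ 2 * w x) = C := rfl
    rw [this]
    field_simp
  rw [hcov]
  exact mul_pos hdiff (by positivity)

/-- Euler-factor tilt, large-`p` regime: for every `λ > 0` there is `p₀` such
that for every prime `p ≥ p₀`, with `t = 1/√p` and `g_t(x) = −log h_t(x)`,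
the covariance `Cov^t_λ(g_t, x²)` is strictly positive. -/
theorem eulerCov_pos_large_p (lam : ℝ) (hlam : 0 < lam) :
    ∃ p₀ : ℕ, ∀ p : ℕ, p.Prime → p₀ ≤ p →
      0 < eulerCov (1 / Real.sqrt p) lam
            (fun x => -Real.log (eulerH (1 / Real.sqrt p) x)) (fun x => x ^ 2) := by
  refine ⟨2, fun p hp hp2 => ?_⟩
  have hp1 : (1:ℝ) < p := by exact_mod_cast Nat.lt_of_lt_of_le one_lt_two hp2
  have hs1 : (1:ℝ) < Real.sqrt p := by
    rw [show (1:ℝ) = Real.sqrt 1 by simp]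
    exact Real.sqrt_lt_sqrt (by norm_num) hp1
  have ht0 : 0 < 1 / Real.sqrt p := by positivity
  have ht1 : 1 / Real.sqrt p < 1 := by
    rw [div_lt_one (by linarith)]
    exact hs1
  exact eulerCov_pos_of_t _ lam ht0 ht1 hlam
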